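/- arXiv:2002.00775 — 3 statements merged into one kernel-verified Lean document; each statement's English description precedes it below -/
import Mathlib

section
/- A connected signed graph G is balanced (i.e., its vertex set can be partitioned into two sets V1, V2 such that every edge within V1 or within V2 is positive and every edge between V1 and V2 is negative) if and only if the smallest eigenvalue of its signed Laplacian L = D - A is equal to 0. -/
open Matrix

structure SignedGraph (V : Type) [Fintype V] [DecidableEq V] where
  sign : V → V → ℝ
  symm : ∀ i j, sign i j = sign j i
  loopless : ∀ i, sign i i = 0
  vals : ∀ i j, sign i j = 0 ∨ sign i j = 1 ∨ sign i j = -1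

variable {V : Type} [Fintype V] [DecidableEq V]

/-- The signed adjacency matrix. -/
def SignedGraph.adj (G : SignedGraph V) : Matrix V V ℝ :=
  Matrix.of G.sign

/-- The degree of a vertex: number of incident edges of either sign. -/
def SignedGraph.deg (G : SignedGraph V) (i : V) : ℝ :=
  ∑ j, |G.sign i j|

/-- The signed Laplacian L = D - A. -/
def SignedGraph.lap (G : SignedGraph V) : Matrix V V ℝ :=
  Matrix.diagonal G.deg - G.adj

/-- A signed graph is balanced if the vertices can be two-colored (±1) so that
every edge sign equals the product of its endpoint colors. -/
def SignedGraph.Balanced (G : SignedGraph V) : Prop :=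
  ∃ x : V → ℝ, (∀ i, x i = 1 ∨ x i = -1) ∧
    ∀ i j, G.sign i j ≠ 0 → G.sign i j = x i * x j

/-- Connectivity of a signed graph. -/
def SignedGraph.Connected (G : SignedGraph V) : Prop :=
  ∀ i j : V, Relation.ReflTransGen (fun a b => G.sign a b ≠ 0) i j

/-- The induced signed subgraph on a vertex set. -/
def SignedGraph.induce (G : SignedGraph V) (S : Finset V) :
    SignedGraph {v // v ∈ S} where
  sign a b := G.sign a.1 b.1
  symm a b := G.symm a.1 b.1
  loopless a := G.loopless a.1
  vals a b := G.vals a.1 b.1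

/-- The underlying simple graph of a signed graph. -/
def SignedGraph.toSimpleGraph (G : SignedGraph V) : SimpleGraph V where
  Adj i j := G.sign i j ≠ 0
  symm := by
    constructor
    intro i j h
    rw [G.symm j i]
    exact h
  loopless := by
    constructor
    intro i h
    exact h (G.loopless i)


namespace SignedGraphAux

open SignedGraph

lemma key_expand (G : SignedGraph V) (x : V → ℝ) (i j : V) :
    |G.sign i j| * (x i - G.sign i j * x j) ^ 2
      = |G.sign i j| * x i ^ 2 + |G.sign i j| * x j ^ 2
        - 2 * (G.sign i j * (x i * x j)) := by
  rcases G.vals i j with h | h | h <;> rw [h] <;> norm_num <;> ring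

lemma lap_mulVec (G : SignedGraph V) (x : V → ℝ) (i : V) :
    (G.lap *ᵥ x) i = G.deg i * x i - ∑ j, G.sign i j * x j := by
  rw [SignedGraph.lap, Matrix.sub_mulVec, Pi.sub_apply, Matrix.mulVec_diagonal]
  congr 1

lemma quad (G : SignedGraph V) (x : V → ℝ) :
    x ⬝ᵥ (G.lap *ᵥ x)
      = (1 / 2) * ∑ i, ∑ j, |G.sign i j| * (x i - G.sign i j * x j) ^ 2 := by
  have lhs : x ⬝ᵥ (G.lap *ᵥ x)
      = ∑ i, ∑ j, (|G.sign i j| * x i ^ 2 - G.sign i j * (x i * x j)) := by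
    simp only [dotProduct, lap_mulVec, SignedGraph.deg]
    refine Finset.sum_congr rfl fun i _ => ?_
    rw [mul_sub, Finset.sum_mul, Finset.mul_sum, Finset.mul_sum,
      ← Finset.sum_sub_distrib]
    exact Finset.sum_congr rfl fun j _ => by ring
  have mid : ∑ i, ∑ j, |G.sign i j| * (x j) ^ 2
      = ∑ i, ∑ j, |G.sign i j| * (x i) ^ 2 := by
    rw [Finset.sum_comm]
    exact Finset.sum_congr rfl fun i _ => Finset.sum_congr rfl fun j _ => by
      rw [G.symm j i]
  calc x ⬝ᵥ (G.lap *ᵥ x)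
      = ∑ i, ∑ j, (|G.sign i j| * x i ^ 2 - G.sign i j * (x i * x j)) := lhs
    _ = (1 / 2) * ∑ i, ∑ j, (|G.sign i j| * x i ^ 2 + |G.sign i j| * x j ^ 2
          - 2 * (G.sign i j * (x i * x j))) := by
        simp only [Finset.sum_add_distrib, Finset.sum_sub_distrib, ← Finset.mul_sum, mid]
        ring
    _ = (1 / 2) * ∑ i, ∑ j, |G.sign i j| * (x i - G.sign i j * x j) ^ 2 := by
        congr 1
        exact Finset.sum_congr rfl fun i _ => Finset.sum_congr rfl fun j _ =>
          (key_expand G x i j).symm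

lemma quad_nonneg (G : SignedGraph V) (x : V → ℝ) :
    0 ≤ x ⬝ᵥ (G.lap *ᵥ x) := by
  rw [quad]
  positivity

lemma eig_nonneg (G : SignedGraph V) (hL : G.lap.IsHermitian) (i : V) :
    0 ≤ hL.eigenvalues i := by
  rw [hL.eigenvalues_eq i]
  simpa using quad_nonneg G _

lemma balanced_mulVec (G : SignedGraph V) (x : V → ℝ)
    (hpm : ∀ i, x i = 1 ∨ x i = -1)
    (hed : ∀ i j, G.sign i j ≠ 0 → G.sign i j = x i * x j) :
    G.lap *ᵥ x = 0 := by
  funext i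
  show (G.lap *ᵥ x) i = 0
  rw [lap_mulVec, sub_eq_zero, SignedGraph.deg, Finset.sum_mul]
  refine Finset.sum_congr rfl fun j _ => ?_
  by_cases h : G.sign i j = 0
  · rw [h]; simp
  · have hs := hed i j h
    have hx2 : x j * x j = 1 := by rcases hpm j with h' | h' <;> rw [h'] <;> norm_num
    have habs : |G.sign i j| = 1 := by
      rcases G.vals i j with h' | h' | h' <;> rw [h'] <;> norm_num
      exact absurd h' h
    rw [habs, hs, one_mul, mul_assoc, hx2, mul_one]

end SignedGraphAux

open SignedGraphAux in
theorem stmt0 [Nonempty V] (G : SignedGraph V) (hconn : G.Connected)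
    (hL : G.lap.IsHermitian) :
    G.Balanced ↔ (⨅ i, hL.eigenvalues i) = 0 := by
  have hbdd : BddBelow (Set.range hL.eigenvalues) := (Set.finite_range _).bddBelow
  constructor
  · rintro ⟨x, hpm, hed⟩
    have hxne : x ≠ 0 := by
      intro h
      have := hpm (Classical.arbitrary V)
      rw [h] at this
      simpa using this
    have hdet : G.lap.det = 0 :=
      Matrix.exists_mulVec_eq_zero_iff.mp ⟨x, hxne, balanced_mulVec G x hpm hed⟩
    have hprod : ∏ i, hL.eigenvalues i = 0 := by
      have h := hL.det_eq_prod_eigenvalues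
      rw [hdet] at h
      simpa using h.symm
    obtain ⟨i, -, hi⟩ := Finset.prod_eq_zero_iff.mp hprod
    refine le_antisymm ?_ (le_ciInf fun j => eig_nonneg G hL j)
    calc ⨅ j, hL.eigenvalues j ≤ hL.eigenvalues i := ciInf_le hbdd i
      _ = 0 := hi
  · intro hinf
    obtain ⟨i₀, hmin⟩ := Finite.exists_min hL.eigenvalues
    have hzero : hL.eigenvalues i₀ = 0 := by
      refine le_antisymm ?_ (eig_nonneg G hL i₀)
      rw [← hinf]
      exact le_ciInf hmin
    set v : V → ℝ := ⇑(hL.eigenvectorBasis i₀) with hv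
    have hmv : G.lap *ᵥ v = 0 := by
      have := hL.mulVec_eigenvectorBasis i₀
      rw [hzero] at this
      simpa using this
    have hvne : ∃ k, v k ≠ 0 := by
      by_contra h
      push_neg at h
      exact hL.eigenvectorBasis.orthonormal.ne_zero i₀ (PiLp.ext fun k => by simpa using h k)
    have hq : ∑ i, ∑ j, |G.sign i j| * (v i - G.sign i j * v j) ^ 2 = 0 := by
      have h1 : v ⬝ᵥ (G.lap *ᵥ v) = 0 := by rw [hmv, dotProduct_zero]
      rw [quad] at h1
      linarith
    have hterm : ∀ i j, |G.sign i j| * (v i - G.sign i j * v j) ^ 2 = 0 := by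
      intro i j
      have h1 := (Finset.sum_eq_zero_iff_of_nonneg (fun i _ =>
        Finset.sum_nonneg fun j _ => by positivity)).mp hq i (Finset.mem_univ i)
      exact (Finset.sum_eq_zero_iff_of_nonneg (fun j _ => by positivity)).mp h1 j
        (Finset.mem_univ j)
    have hedge : ∀ i j, G.sign i j ≠ 0 → v i = G.sign i j * v j := by
      intro i j h
      have habs : 0 < |G.sign i j| := abs_pos.mpr h
      have := hterm i j
      have hsq : (v i - G.sign i j * v j) ^ 2 = 0 := by
        rcases mul_eq_zero.mp this with h' | h'
        · exact absurd h' habs.ne'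
        · exact h'
      have := (pow_eq_zero_iff two_ne_zero).mp hsq
      linarith [sub_eq_zero.mp this]
    have habs1 : ∀ i j, G.sign i j ≠ 0 → |G.sign i j| = 1 := by
      intro i j h
      rcases G.vals i j with h' | h' | h' <;> rw [h'] <;> norm_num
      exact absurd h' h
    have habs : ∀ i j, |v i| = |v j| := by
      intro i j
      induction hconn i j with
      | refl => rfl
      | tail _ hbc ih =>
        rename_i b c _
        rw [ih, hedge b c hbc, abs_mul, habs1 b c hbc, one_mul]
    obtain ⟨k, hk⟩ := hvne
    set c : ℝ := |v k| with hc
    have hc0 : 0 < c := abs_pos.mpr hk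
    have hvc : ∀ i, |v i| = c := fun i => habs i k
    refine ⟨fun i => v i / c, fun i => ?_, fun i j h => ?_⟩
    · show v i / c = 1 ∨ v i / c = -1
      rcases (abs_eq hc0.le).mp (hvc i) with h' | h'
      · left; rw [h', div_self hc0.ne']
      · right; rw [h', neg_div, div_self hc0.ne']
    · have h1 := hedge i j h
      have hj2 : v j * v j = c * c := by
        rcases (abs_eq hc0.le).mp (hvc j) with h' | h' <;> rw [h'] <;> ring
      have hcc : c * c ≠ 0 := by positivity
      show G.sign i j = v i / c * (v j / c)
      calc G.sign i j = G.sign i j * (v j * v j) / (c * c) := by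
            rw [hj2, mul_div_assoc, div_self hcc, mul_one]
        _ = v i / c * (v j / c) := by rw [h1]; ring
end

section
/- Let G be a signed graph with signed Laplacian L, let λ1(L) be the smallest eigenvalue of L with unit eigenvector v satisfying L v = λ1(L) v. For any vertex i with |v_i| < 1, let L^(i) be the signed Laplacian of the graph obtained by deleting vertex i and its incident edges. Then λ1(L^(i)) ≤ (λ1(L)(1 - 2 v_i^2) - Σ_{j ∈ N(i)} v_j^2 + v_i^2 d(i)) / (1 - v_i^2), where N(i) is the set of neighbours of i and d(i) its degree. -/
open Matrix

variable {V : Type} [Fintype V] [DecidableEq V]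

lemma rayleigh_aux {n : Type} [Fintype n] [DecidableEq n] [Nonempty n] {A : Matrix n n ℝ}
    (hA : A.IsHermitian) (x : n → ℝ) :
    (⨅ k, hA.eigenvalues k) * (x ⬝ᵥ x) ≤ x ⬝ᵥ (A *ᵥ x) := by
  classical
  set b := hA.eigenvectorBasis with hb
  have hinner : ∀ u w : EuclideanSpace ℝ n, inner ℝ u w = ∑ k, u k * w k := by
    intro u w
    simp [PiLp.inner_apply, mul_comm]
  have hAT : Aᵀ = A := by
    ext j k
    simpa using (hA.apply k j).symm
  have hsym : ∀ u w : n → ℝ, u ⬝ᵥ (A *ᵥ w) = (A *ᵥ u) ⬝ᵥ w := by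
    intro u w
    rw [Matrix.dotProduct_mulVec, ← Matrix.vecMul_transpose, hAT]
  set y : EuclideanSpace ℝ n := WithLp.toLp 2 x with hy
  have h1 : x ⬝ᵥ x = ∑ k, inner ℝ y (b k) * inner ℝ (b k) y := by
    rw [b.sum_inner_mul_inner y y, hinner]
    rfl
  have hbk : ∀ k, inner ℝ (b k) (WithLp.toLp 2 (A *ᵥ x))
      = hA.eigenvalues k * inner ℝ (b k) y := by
    intro k
    rw [hinner, hinner]
    have : ∑ j, (b k : n → ℝ) j * (A *ᵥ x) j = (⇑(b k)) ⬝ᵥ (A *ᵥ x) := rfl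
    rw [this, hsym, hA.mulVec_eigenvectorBasis]
    simp [dotProduct, Finset.mul_sum, mul_assoc]
    rfl
  have h2 : x ⬝ᵥ (A *ᵥ x) = ∑ k, hA.eigenvalues k * (inner ℝ y (b k) * inner ℝ (b k) y) := by
    have := b.sum_inner_mul_inner y (WithLp.toLp 2 (A *ᵥ x))
    rw [hinner] at this
    have hx : x ⬝ᵥ (A *ᵥ x) = ∑ k, y k * (WithLp.toLp 2 (A *ᵥ x) : EuclideanSpace ℝ n) k := rfl
    rw [hx, ← this]
    apply Finset.sum_congr rfl
    intro k _
    rw [hbk k]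
    ring
  rw [h1, h2, Finset.mul_sum]
  apply Finset.sum_le_sum
  intro k _
  have ht : (0:ℝ) ≤ inner ℝ y (b k) * inner ℝ (b k) y := by
    rw [real_inner_comm y (b k)]
    exact mul_self_nonneg _
  exact mul_le_mul_of_nonneg_right (ciInf_le (Finite.bddBelow_range _) k) ht

theorem stmt2 (G : SignedGraph V) (hL : G.lap.IsHermitian)
    (v : V → ℝ) (hunit : ∑ j, v j ^ 2 = 1)
    (heig : G.lap.mulVec v = (⨅ k, hL.eigenvalues k) • v)
    (i : V) (hvi : |v i| < 1)
    (hLi : (G.induce ({i}ᶜ : Finset V)).lap.IsHermitian) :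
    (⨅ k, hLi.eigenvalues k) ≤
      ((⨅ k, hL.eigenvalues k) * (1 - 2 * v i ^ 2)
          - (∑ j, |G.sign i j| * v j ^ 2) + v i ^ 2 * G.deg i) /
        (1 - v i ^ 2) := by
  classical
  set lam := ⨅ k, hL.eigenvalues k with hlam
  set S : Finset V := ({i}ᶜ : Finset V) with hS
  have hvi2 : v i ^ 2 < 1 := by
    have h := abs_nonneg (v i)
    nlinarith [sq_abs (v i)]
  have hpos : 0 < 1 - v i ^ 2 := by linarith
  have E1 : ∀ f : V → ℝ, ∑ j ∈ S, f j = (∑ j, f j) - f i := by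
    intro f
    have h := Finset.sum_compl_add_sum ({i} : Finset V) f
    rw [Finset.sum_singleton] at h
    rw [hS]
    linarith
  have key : ∑ j ∈ S, v j ^ 2 = 1 - v i ^ 2 := by rw [E1, hunit]
  have hSne : Nonempty {x // x ∈ S} := by
    by_contra h
    have hemp : S = ∅ := by
      rw [Finset.eq_empty_iff_forall_notMem]
      intro a ha
      exact h ⟨⟨a, ha⟩⟩
    rw [hemp, Finset.sum_empty] at key
    linarith
  set w : {x // x ∈ S} → ℝ := fun j => v j.1 with hw
  have h1 : ∀ j, (G.lap *ᵥ v) j = G.deg j * v j - ∑ k, G.sign j k * v k := by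
    intro j
    simp [SignedGraph.lap, SignedGraph.adj, Matrix.mulVec, dotProduct,
      Matrix.diagonal_apply, sub_mul, Finset.sum_sub_distrib, ite_mul, Finset.sum_ite_eq]
  have hT : ∑ k, G.sign i k * v k = G.deg i * v i - lam * v i := by
    have h := congrFun heig i
    rw [h1 i] at h
    simp only [Pi.smul_apply, smul_eq_mul] at h
    linarith
  have hP : ∑ j, v j * (G.deg j * v j - ∑ k, G.sign j k * v k) = lam := by
    have e : ∀ j, v j * (G.deg j * v j - ∑ k, G.sign j k * v k) = v j * (lam * v j) := by
      intro j
      rw [← h1 j, heig]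
      simp
    rw [Finset.sum_congr rfl fun j _ => e j]
    have e2 : ∑ j, v j * (lam * v j) = lam * ∑ j, v j ^ 2 := by
      rw [Finset.mul_sum]
      apply Finset.sum_congr rfl
      intro j _
      ring
    rw [e2, hunit, mul_one]
  have hdeg' : ∀ j : {x // x ∈ S}, (G.induce S).deg j = G.deg j.1 - |G.sign j.1 i| := by
    intro j
    show ∑ k : {x // x ∈ S}, |G.sign j.1 k.1| = _
    rw [Finset.sum_coe_sort S (fun k => |G.sign j.1 k|), E1]
    rfl
  have hadj' : ∀ j : {x // x ∈ S}, ∑ k : {x // x ∈ S}, G.sign j.1 k.1 * v k.1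
      = (∑ k, G.sign j.1 k * v k) - G.sign j.1 i * v i := by
    intro j
    rw [Finset.sum_coe_sort S (fun k => G.sign j.1 k * v k), E1]
  have h1' : ∀ j : {x // x ∈ S}, ((G.induce S).lap *ᵥ w) j
      = (G.deg j.1 - |G.sign j.1 i|) * v j.1
        - ((∑ k, G.sign j.1 k * v k) - G.sign j.1 i * v i) := by
    intro j
    have e1 : ((G.induce S).lap *ᵥ w) j
        = (G.induce S).deg j * w j - ∑ k : {x // x ∈ S}, G.sign j.1 k.1 * v k.1 := by
      simp [SignedGraph.lap, SignedGraph.adj, Matrix.mulVec, dotProduct,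
        SignedGraph.induce, SignedGraph.deg, Matrix.diagonal_apply, sub_mul,
        Finset.sum_sub_distrib, ite_mul, Finset.sum_ite_eq, Finset.sum_mul, hw]
    rw [e1, hdeg' j, hadj' j]
  set F : V → ℝ := fun j => v j * ((G.deg j - |G.sign j i|) * v j
      - ((∑ k, G.sign j k * v k) - G.sign j i * v i)) with hF
  have hQF : w ⬝ᵥ ((G.induce S).lap *ᵥ w) = ∑ j ∈ S, F j := by
    rw [← Finset.sum_coe_sort S F]
    apply Finset.sum_congr rfl
    intro j _
    rw [h1' j]
  have hFi : F i = v i * (G.deg i * v i - ∑ k, G.sign i k * v k) := by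
    simp [hF, G.loopless i]
  have hsum : ∑ j, F j = (∑ j, v j * (G.deg j * v j - ∑ k, G.sign j k * v k))
      - (∑ j, |G.sign i j| * v j ^ 2) + v i * ∑ k, G.sign i k * v k := by
    rw [Finset.mul_sum, ← Finset.sum_sub_distrib, ← Finset.sum_add_distrib]
    apply Finset.sum_congr rfl
    intro j _
    simp only [hF]
    rw [G.symm j i]
    ring
  have hQ : w ⬝ᵥ ((G.induce S).lap *ᵥ w)
      = lam * (1 - 2 * v i ^ 2) - (∑ j, |G.sign i j| * v j ^ 2) + v i ^ 2 * G.deg i := by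
    rw [hQF, E1 F, hsum, hFi, hP, hT]
    ring
  have hww : w ⬝ᵥ w = 1 - v i ^ 2 := by
    show ∑ j : {x // x ∈ S}, v j.1 * v j.1 = _
    rw [Finset.sum_coe_sort S (fun j => v j * v j)]
    have e : ∑ j ∈ S, v j * v j = ∑ j ∈ S, v j ^ 2 := by
      apply Finset.sum_congr rfl
      intro j _
      ring
    rw [e, key]
  have hray := rayleigh_aux hLi w
  rw [hww, hQ] at hray
  rw [le_div_iff₀ hpos]
  exact hray
end

section
/- Let G be a signed graph, let L be its signed Laplacian, and let v be a unit eigenvector of L with eigenvalue λ1. For a vertex i, let L^(i) be the Laplacian of G with vertex i removed and let v̂ be v with the i-th entry removed. Then v̂^T L^(i) v̂ = λ1 - (Σ_{j∈N(i)} v_j^2 + v_i^2 (2λ1 - d(i))). -/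
open Matrix

variable {V : Type} [Fintype V] [DecidableEq V]

theorem stmt14 (G : SignedGraph V) (hL : G.lap.IsHermitian)
    (v : V → ℝ) (hunit : ∑ j, v j ^ 2 = 1)
    (heig : G.lap.mulVec v = (⨅ k, hL.eigenvalues k) • v) (i : V) :
    (fun j : {x // x ∈ ({i}ᶜ : Finset V)} => v j.1) ⬝ᵥ
        (G.induce ({i}ᶜ : Finset V)).lap.mulVec (fun j => v j.1) =
      (⨅ k, hL.eigenvalues k) -
        ((∑ j, |G.sign i j| * v j ^ 2) +
          v i ^ 2 * (2 * (⨅ k, hL.eigenvalues k) - G.deg i)) := by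
  set lam := ⨅ k, hL.eigenvalues k with hlam
  set T : Finset V := ({i}ᶜ : Finset V) with hTdef
  have hiT : i ∉ T := by simp [hTdef]
  -- row equation
  have hrow : ∀ j, ∑ k, G.sign j k * v k = (G.deg j - lam) * v j := by
    intro j
    have h := congrFun heig j
    simp only [Matrix.mulVec, dotProduct, SignedGraph.lap, SignedGraph.adj,
      Matrix.sub_apply, Matrix.diagonal_apply, Matrix.of_apply, sub_mul, ite_mul,
      zero_mul, Finset.sum_sub_distrib, Finset.sum_ite_eq, Finset.mem_univ, if_true,
      Pi.smul_apply, smul_eq_mul] at h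
    linarith
  -- sums over T vs univ
  have hsplit : ∀ f : V → ℝ, ∑ j ∈ T, f j = (∑ j, f j) - f i := by
    intro f
    have := Finset.sum_compl_add_sum ({i} : Finset V) f
    simp only [Finset.sum_singleton] at this
    linarith
  -- LHS as double sum over T
  have hLHS : (fun j : {x // x ∈ T} => v j.1) ⬝ᵥ
      (G.induce T).lap.mulVec (fun j => v j.1) =
      ∑ j ∈ T, v j * ((G.deg j - |G.sign j i|) * v j - ∑ k ∈ T, G.sign j k * v k) := by
    rw [dotProduct,
      ← Finset.sum_coe_sort T (fun j => v j * ((G.deg j - |G.sign j i|) * v j - ∑ k ∈ T, G.sign j k * v k))]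
    refine Finset.sum_congr rfl fun j _ => ?_
    have hdeg : (G.induce T).deg j = G.deg j.1 - |G.sign j.1 i| := by
      have h0 : (G.induce T).deg j = ∑ k ∈ T, |G.sign j.1 k| :=
        Finset.sum_coe_sort T (fun k => |G.sign j.1 k|)
      rw [h0, hsplit (fun k => |G.sign j.1 k|)]; rfl
    have hs : ((G.induce T).adj.mulVec (fun k : {x // x ∈ T} => v k.1)) j
        = ∑ k ∈ T, G.sign j.1 k * v k := by
      rw [← Finset.sum_coe_sort T (fun k => G.sign j.1 k * v k)]
      rfl
    have hm : (G.induce T).lap.mulVec (fun k : {x // x ∈ T} => v k.1) j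
        = (G.induce T).deg j * v j.1 - ∑ k ∈ T, G.sign j.1 k * v k := by
      rw [SignedGraph.lap, Matrix.sub_mulVec, Pi.sub_apply, Matrix.mulVec_diagonal, hs]
    rw [hm, hdeg]
  rw [hLHS]
  have hinner : ∀ j, ∑ k ∈ T, G.sign j k * v k = (G.deg j - lam) * v j - G.sign j i * v i := by
    intro j
    rw [hsplit (fun k => G.sign j k * v k), hrow j]
  have step : ∑ j ∈ T, v j * ((G.deg j - |G.sign j i|) * v j - ∑ k ∈ T, G.sign j k * v k)
      = ∑ j ∈ T, ((lam - |G.sign j i|) * v j ^ 2 + G.sign j i * (v i * v j)) := by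
    refine Finset.sum_congr rfl fun j _ => ?_
    rw [hinner j]; ring
  rw [step, Finset.sum_add_distrib]
  have h1 : ∑ j ∈ T, (lam - |G.sign j i|) * v j ^ 2
      = lam * (1 - v i ^ 2) - ((∑ j, |G.sign i j| * v j ^ 2)) := by
    rw [hsplit]
    have e1 : ∑ j, (lam - |G.sign j i|) * v j ^ 2
        = lam * (∑ j, v j ^ 2) - ∑ j, |G.sign i j| * v j ^ 2 := by
      rw [Finset.mul_sum, ← Finset.sum_sub_distrib]
      refine Finset.sum_congr rfl fun j _ => ?_
      rw [G.symm i j]; ring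
    rw [e1, hunit, G.loopless i]
    simp; ring
  have h2 : ∑ j ∈ T, G.sign j i * (v i * v j) = (G.deg i - lam) * v i ^ 2 := by
    rw [hsplit, G.loopless i]
    have e2 : ∑ j, G.sign j i * (v i * v j) = v i * ∑ j, G.sign i j * v j := by
      rw [Finset.mul_sum]
      refine Finset.sum_congr rfl fun j _ => ?_
      rw [G.symm i j]; ring
    rw [e2, hrow i]; ring
  rw [h1, h2]; ring
end
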